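/- Let x, y be strictly positive probability vectors in ℝ^n and α ∈ (0,1) ∪ (1,2]. If e_k(x) ≤ e_k(y) for all k = 1,…,n, then the Rényi entropy satisfies H_α(x) ≤ H_α(y), where H_α(x) = (1/(1−α)) log(Σ_i x_i^α). -/

import Mathlib

open Finset Real

noncomputable def esymm (n k : ℕ) (x : Fin n → ℝ) : ℝ :=
  ∑ s ∈ Finset.powersetCard k (Finset.univ : Finset (Fin n)), ∏ i ∈ s, x i

/-- Rényi entropy of order α of a probability vector. -/
noncomputable def renyiEntropy (n : ℕ) (α : ℝ) (x : Fin n → ℝ) : ℝ :=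
  (1 / (1 - α)) * Real.log (∑ i, (x i) ^ α)

lemma esymm_zero_eq (n : ℕ) (x : Fin n → ℝ) : esymm n 0 x = 1 := by
  simp [esymm]

lemma prod_one_add_eq (n : ℕ) (x : Fin n → ℝ) (s : ℝ) :
    ∏ i, (1 + x i * s) = ∑ k ∈ Finset.range (n + 1), esymm n k x * s ^ k := by
  have h := Finset.prod_add (fun i => x i * s) (fun _ => (1 : ℝ))
    (Finset.univ : Finset (Fin n))
  simp only [Finset.prod_const_one, mul_one] at h
  have h0 : ∏ i, (1 + x i * s) = ∏ i, (x i * s + 1) := by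
    apply Finset.prod_congr rfl; intros; ring
  rw [h0, h, Finset.sum_powerset]
  rw [Finset.card_univ, Fintype.card_fin]
  refine Finset.sum_congr rfl fun k hk => ?_
  rw [esymm, Finset.sum_mul]
  refine Finset.sum_congr rfl fun t ht => ?_
  have hc : t.card = k := (Finset.mem_powersetCard.mp ht).2
  rw [Finset.prod_mul_distrib, Finset.prod_const, hc, mul_comm]

open MeasureTheory Set


lemma prod_le_prod_of_esymm (n : ℕ) (x y : Fin n → ℝ)
    (hE : ∀ k, 1 ≤ k → k ≤ n → esymm n k x ≤ esymm n k y) (u : ℝ) (hu : 0 ≤ u) :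
    ∏ i, (1 + x i * u) ≤ ∏ i, (1 + y i * u) := by
  rw [prod_one_add_eq, prod_one_add_eq]
  refine Finset.sum_le_sum fun k hk => ?_
  rcases Nat.eq_zero_or_pos k with rfl | hk1
  · rw [esymm_zero_eq, esymm_zero_eq]
  · exact mul_le_mul_of_nonneg_right
      (hE k hk1 (Nat.lt_succ_iff.mp (Finset.mem_range.mp hk)))
      (pow_nonneg hu k)

lemma sum_log_mono (n : ℕ) (x y : Fin n → ℝ)
    (hx : ∀ i, 0 < x i) (hy : ∀ i, 0 < y i)
    (hE : ∀ k, 1 ≤ k → k ≤ n → esymm n k x ≤ esymm n k y) (u : ℝ) (hu : 0 ≤ u) :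
    ∑ i, Real.log (1 + x i * u) ≤ ∑ i, Real.log (1 + y i * u) := by
  have hxp : ∀ i : Fin n, (0:ℝ) < 1 + x i * u := fun i => by nlinarith [hx i, (hx i).le]
  have hyp : ∀ i : Fin n, (0:ℝ) < 1 + y i * u := fun i => by nlinarith [hy i, (hy i).le]
  rw [← Real.log_prod (fun i _ => (hxp i).ne'),
      ← Real.log_prod (fun i _ => (hyp i).ne')]
  exact Real.log_le_log (Finset.prod_pos fun i _ => hxp i)
    (prod_le_prod_of_esymm n x y hE u hu)

lemma sq_sum_eq (n : ℕ) (x : Fin n → ℝ) (s : Finset (Fin n)) :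
    (∑ i ∈ s, x i) ^ 2 =
      ∑ i ∈ s, x i ^ 2 + 2 * ∑ t ∈ s.powersetCard 2, ∏ i ∈ t, x i := by
  induction s using Finset.cons_induction with
  | empty =>
    rw [show ((∅:Finset (Fin n)).powersetCard 2) = ∅ from by
      apply Finset.powersetCard_eq_empty.mpr; simp]
    simp
  | cons a s ha ih =>
    rw [Finset.sum_cons, Finset.sum_cons, Finset.cons_eq_insert,
      Finset.powersetCard_succ_insert ha, Finset.sum_union]
    · rw [Finset.sum_image (fun t ht t' ht' h => by
        have h1 : a ∉ t := fun hmem =>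
          ha ((Finset.mem_powersetCard.mp ht).1 hmem)
        have h2 : a ∉ t' := fun hmem =>
          ha ((Finset.mem_powersetCard.mp ht').1 hmem)
        exact (Finset.erase_insert h1) ▸ (Finset.erase_insert h2) ▸ h ▸ rfl)]
      have hone : ∑ t ∈ s.powersetCard 1, ∏ i ∈ (insert a t), x i
          = x a * ∑ i ∈ s, x i := by
        rw [Finset.powersetCard_one, Finset.sum_map, Finset.mul_sum]
        refine Finset.sum_congr rfl fun i hi => ?_
        have hai : a ≠ i := fun h => ha (h ▸ hi)
        simp [Finset.prod_insert, hai]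
      rw [hone]
      have h2 : Nat.succ 1 = 2 := rfl
      rw [h2]
      linear_combination ih
    · rw [Finset.disjoint_right]
      rintro t ht hmem
      obtain ⟨t', ht', rfl⟩ := Finset.mem_image.mp ht
      exact ha ((Finset.mem_powersetCard.mp hmem).1 (Finset.mem_insert_self a t'))

-- generic scaling lemma
lemma scale_integrable {φ : ℝ → ℝ} {α : ℝ}
    (hint : IntegrableOn (fun u => φ u * u ^ (-1 - α)) (Ioi 0))
    {c : ℝ} (hc : 0 < c) :
    IntegrableOn (fun u => φ (c * u) * u ^ (-1 - α)) (Ioi 0) := by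
  have h1 : IntegrableOn (fun u => φ (c * u) * (c * u) ^ (-1 - α)) (Ioi 0) := by
    have := (integrableOn_Ioi_comp_mul_left_iff
      (fun u => φ u * u ^ (-1 - α)) 0 hc).mpr (by simpa using hint)
    simpa using this
  refine IntegrableOn.congr_fun (h1.const_mul (c ^ (1 + α))) (fun u hu => ?_) measurableSet_Ioi
  · have hu : (0:ℝ) < u := hu
    rw [Real.mul_rpow hc.le hu.le]
    rw [show c ^ (1 + α) * (φ (c * u) * (c ^ (-1 - α) * u ^ (-1 - α)))
      = (c ^ (1 + α) * c ^ (-1 - α)) * (φ (c * u) * u ^ (-1 - α)) from by ring,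
      ← Real.rpow_add hc]
    norm_num

lemma scale_eq {φ : ℝ → ℝ} {α : ℝ}
    (hint : IntegrableOn (fun u => φ u * u ^ (-1 - α)) (Ioi 0))
    {c : ℝ} (hc : 0 < c) :
    ∫ u in Ioi 0, φ (c * u) * u ^ (-1 - α)
      = c ^ α * ∫ u in Ioi 0, φ u * u ^ (-1 - α) := by
  have h1 := integral_comp_mul_left_Ioi (fun u => φ u * u ^ (-1 - α)) 0 hc
  rw [mul_zero] at h1
  have h2 : ∫ u in Ioi 0, φ (c * u) * u ^ (-1 - α)
      = ∫ u in Ioi 0, c ^ (1 + α) * (φ (c * u) * (c * u) ^ (-1 - α)) := by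
    refine setIntegral_congr_fun measurableSet_Ioi (fun u hu => ?_)
    have hu : (0:ℝ) < u := hu
    rw [Real.mul_rpow hc.le hu.le,
      show c ^ (1 + α) * (φ (c * u) * (c ^ (-1 - α) * u ^ (-1 - α)))
      = (c ^ (1 + α) * c ^ (-1 - α)) * (φ (c * u) * u ^ (-1 - α)) from by ring,
      ← Real.rpow_add hc]
    norm_num
  rw [h2, integral_const_mul, h1, smul_eq_mul, ← mul_assoc,
    show c⁻¹ = c ^ (-1 : ℝ) from (Real.rpow_neg_one c).symm, ← Real.rpow_add hc]
  ring_nf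

-- generic positivity lemma
lemma K_pos {g : ℝ → ℝ} (hint : IntegrableOn g (Ioi 0))
    (hnn : ∀ u ∈ Ioi (0:ℝ), 0 ≤ g u) {ε : ℝ} (hε : 0 < ε)
    (hlb : ∀ u ∈ Ioc (1:ℝ) 2, ε ≤ g u) :
    0 < ∫ u in Ioi 0, g u := by
  have hsub : Ioc (1:ℝ) 2 ⊆ Ioi 0 := fun u hu => lt_trans one_pos hu.1
  have h1 : ∫ u in Ioc (1:ℝ) 2, g u ≤ ∫ u in Ioi 0, g u := by
    refine setIntegral_mono_set hint ?_ (HasSubset.Subset.eventuallyLE hsub)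
    filter_upwards [self_mem_ae_restrict measurableSet_Ioi] with u hu
    exact hnn u hu
  have h2 : ε ≤ ∫ u in Ioc (1:ℝ) 2, g u := by
    have hconst : ∫ _ in Ioc (1:ℝ) 2, ε = ε := by
      simp [Real.volume_Ioc]; norm_num
    rw [← hconst]
    refine setIntegral_mono_on (integrableOn_const (by simp [Real.volume_Ioc]))
      (hint.mono_set hsub) measurableSet_Ioc hlb
  linarith

lemma meas_aux (α : ℝ) (φ : ℝ → ℝ) (hφ : Measurable φ) :
    AEStronglyMeasurable (fun u : ℝ => φ u * u ^ (-1 - α))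
      (volume.restrict (Ioi (0:ℝ))) := by
  exact ((hφ.mul (by fun_prop : Measurable fun u : ℝ => u ^ (-1-α))).aestronglyMeasurable)

lemma int1 {α : ℝ} (h0 : 0 < α) (h1 : α < 1) :
    IntegrableOn (fun u => Real.log (1 + u) * u ^ (-1 - α)) (Ioi 0) := by
  have hm : Measurable (fun u : ℝ => Real.log (1 + u) * u ^ (-1 - α)) :=
    (Real.measurable_log.comp (measurable_const.add measurable_id)).mul
      (by fun_prop : Measurable fun u : ℝ => u ^ (-1 - α))
  rw [← Ioc_union_Ioi_eq_Ioi (zero_le_one (α := ℝ))]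
  apply IntegrableOn.union
  · have hg : IntegrableOn (fun u : ℝ => u ^ (-α)) (Ioc 0 1) := by
      have := intervalIntegral.intervalIntegrable_rpow' (a := 0) (b := 1) (r := -α)
        (by linarith)
      rwa [intervalIntegrable_iff_integrableOn_Ioc_of_le zero_le_one] at this
    refine Integrable.mono hg hm.aestronglyMeasurable ?_
    filter_upwards [self_mem_ae_restrict measurableSet_Ioc] with u hu
    have hu0 : (0:ℝ) < u := hu.1
    have hlog0 : 0 ≤ Real.log (1 + u) := Real.log_nonneg (by linarith)
    have hlog : Real.log (1 + u) ≤ u := by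
      have := Real.log_le_sub_one_of_pos (show (0:ℝ) < 1 + u by linarith)
      linarith
    have hrp : (0:ℝ) ≤ u ^ (-1 - α) := (Real.rpow_pos_of_pos hu0 _).le
    have e1 : u ^ (-α) = u * u ^ (-1 - α) := by
      rw [show -α = 1 + (-1 - α) by ring, Real.rpow_add hu0, Real.rpow_one]
    rw [Real.norm_eq_abs, Real.norm_eq_abs, abs_of_nonneg (mul_nonneg hlog0 hrp),
      abs_of_nonneg (by positivity), e1]
    exact mul_le_mul_of_nonneg_right hlog hrp
  · have hg : IntegrableOn (fun u : ℝ => 4 / α * u ^ (α / 2 - 1 - α)) (Ioi 1) :=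
      (integrableOn_Ioi_rpow_of_lt (by linarith) one_pos).const_mul _
    refine Integrable.mono hg hm.aestronglyMeasurable ?_
    filter_upwards [self_mem_ae_restrict measurableSet_Ioi] with u hu
    have hu1 : (1:ℝ) < u := hu
    have hu0 : (0:ℝ) < u := by linarith
    have hlog0 : 0 ≤ Real.log (1 + u) := Real.log_nonneg (by linarith)
    have hrp : (0:ℝ) ≤ u ^ (-1 - α) := (Real.rpow_pos_of_pos hu0 _).le
    have hlog : Real.log (1 + u) ≤ 4 / α * u ^ (α / 2) := by
      have l1 : Real.log (1 + u) ≤ Real.log (2 * u) :=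
        Real.log_le_log (by linarith) (by linarith)
      have l2 : Real.log (2 * u) ≤ (2 * u) ^ (α / 2) / (α / 2) :=
        Real.log_le_rpow_div (by positivity) (by positivity)
      have l3 : (2 * u) ^ (α / 2) = 2 ^ (α / 2) * u ^ (α / 2) :=
        Real.mul_rpow (by norm_num) hu0.le
      have l4 : (2:ℝ) ^ (α / 2) ≤ 2 := by
        calc (2:ℝ) ^ (α / 2) ≤ 2 ^ (1:ℝ) :=
              Real.rpow_le_rpow_of_exponent_le one_le_two (by linarith)
          _ = 2 := Real.rpow_one 2
      have l5 : (0:ℝ) ≤ u ^ (α / 2) := (Real.rpow_pos_of_pos hu0 _).le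
      have l6 : (2 * u) ^ (α / 2) ≤ 2 * u ^ (α / 2) :=
        l3 ▸ mul_le_mul_of_nonneg_right l4 l5
      have hα2 : (0:ℝ) < α / 2 := by positivity
      calc Real.log (1 + u) ≤ (2 * u) ^ (α / 2) / (α / 2) := le_trans l1 l2
        _ ≤ 2 * u ^ (α / 2) / (α / 2) := by gcongr
        _ = 4 / α * u ^ (α / 2) := by field_simp; ring
    have e1 : 4 / α * u ^ (α / 2 - 1 - α) = (4 / α * u ^ (α / 2)) * u ^ (-1 - α) := by
      rw [show α / 2 - 1 - α = α / 2 + (-1 - α) by ring, Real.rpow_add hu0]; ring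
    rw [Real.norm_eq_abs, Real.norm_eq_abs, abs_of_nonneg (mul_nonneg hlog0 hrp),
      abs_of_nonneg (by positivity), e1]
    exact mul_le_mul_of_nonneg_right hlog hrp

lemma int2 {α : ℝ} (h1 : 1 < α) (h2 : α < 2) :
    IntegrableOn (fun u => (u - Real.log (1 + u)) * u ^ (-1 - α)) (Ioi 0) := by
  have hm : Measurable (fun u : ℝ => (u - Real.log (1 + u)) * u ^ (-1 - α)) :=
    (measurable_id.sub (Real.measurable_log.comp (measurable_const.add measurable_id))).mul
      (by fun_prop : Measurable fun u : ℝ => u ^ (-1 - α))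
  rw [← Ioc_union_Ioi_eq_Ioi (zero_le_one (α := ℝ))]
  apply IntegrableOn.union
  · have hg : IntegrableOn (fun u : ℝ => u ^ (1 - α)) (Ioc 0 1) := by
      have := intervalIntegral.intervalIntegrable_rpow' (a := 0) (b := 1) (r := 1 - α)
        (by linarith)
      rwa [intervalIntegrable_iff_integrableOn_Ioc_of_le zero_le_one] at this
    refine Integrable.mono hg hm.aestronglyMeasurable ?_
    filter_upwards [self_mem_ae_restrict measurableSet_Ioc] with u hu
    have hu0 : (0:ℝ) < u := hu.1
    have h1u : (0:ℝ) < 1 + u := by linarith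
    have hnn : 0 ≤ u - Real.log (1 + u) := by
      have := Real.log_le_sub_one_of_pos h1u; linarith
    have hub : u - Real.log (1 + u) ≤ u * u := by
      have hl := Real.one_sub_inv_le_log_of_pos h1u
      have hinv : (1 + u)⁻¹ * (1 + u) = 1 := inv_mul_cancel₀ h1u.ne'
      nlinarith [hinv, hu0.le]
    have hrp : (0:ℝ) ≤ u ^ (-1 - α) := (Real.rpow_pos_of_pos hu0 _).le
    have e1 : u ^ (1 - α) = u * (u * u ^ (-1 - α)) := by
      rw [show 1 - α = 1 + (1 + (-1 - α)) by ring, Real.rpow_add hu0, Real.rpow_one,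
        Real.rpow_add hu0, Real.rpow_one]
    rw [Real.norm_eq_abs, Real.norm_eq_abs, abs_of_nonneg (mul_nonneg hnn hrp),
      abs_of_nonneg (by positivity), e1, ← mul_assoc]
    exact mul_le_mul_of_nonneg_right hub hrp
  · have hg : IntegrableOn (fun u : ℝ => u ^ (-α)) (Ioi 1) :=
      integrableOn_Ioi_rpow_of_lt (by linarith) one_pos
    refine Integrable.mono hg hm.aestronglyMeasurable ?_
    filter_upwards [self_mem_ae_restrict measurableSet_Ioi] with u hu
    have hu1 : (1:ℝ) < u := hu
    have hu0 : (0:ℝ) < u := by linarith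
    have hlog0 : 0 ≤ Real.log (1 + u) := Real.log_nonneg (by linarith)
    have hnn : 0 ≤ u - Real.log (1 + u) := by
      have := Real.log_le_sub_one_of_pos (show (0:ℝ) < 1 + u by linarith); linarith
    have hrp : (0:ℝ) ≤ u ^ (-1 - α) := (Real.rpow_pos_of_pos hu0 _).le
    have e1 : u ^ (-α) = u * u ^ (-1 - α) := by
      rw [show -α = 1 + (-1 - α) by ring, Real.rpow_add hu0, Real.rpow_one]
    rw [Real.norm_eq_abs, Real.norm_eq_abs, abs_of_nonneg (mul_nonneg hnn hrp),
      abs_of_nonneg (by positivity), e1]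
    exact mul_le_mul_of_nonneg_right (by linarith) hrp

lemma K1_pos {α : ℝ} (h0 : 0 < α) (h1 : α < 1) :
    0 < ∫ u in Ioi 0, Real.log (1 + u) * u ^ (-1 - α) := by
  refine K_pos (int1 h0 h1) (fun u hu => ?_)
    (mul_pos (Real.log_pos one_lt_two) (Real.rpow_pos_of_pos two_pos (-1 - α)))
    (fun u hu => ?_)
  · have hu0 : (0:ℝ) < u := hu
    exact mul_nonneg (Real.log_nonneg (by linarith)) (Real.rpow_pos_of_pos hu0 _).le
  · have hu1 : (1:ℝ) < u := hu.1
    have hu2 : u ≤ 2 := hu.2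
    have hu0 : (0:ℝ) < u := by linarith
    have l1 : Real.log 2 ≤ Real.log (1 + u) := Real.log_le_log two_pos (by linarith)
    have l2 : (2:ℝ) ^ (-1 - α) ≤ u ^ (-1 - α) :=
      Real.rpow_le_rpow_of_nonpos hu0 hu2 (by linarith)
    exact mul_le_mul l1 l2 (Real.rpow_pos_of_pos two_pos _).le
      (Real.log_nonneg (by linarith))

lemma K2_pos {α : ℝ} (h1 : 1 < α) (h2 : α < 2) :
    0 < ∫ u in Ioi 0, (u - Real.log (1 + u)) * u ^ (-1 - α) := by
  have hlog2 : Real.log 2 < 1 := by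
    have := Real.log_two_lt_d9; linarith
  refine K_pos (int2 h1 h2) (fun u hu => ?_)
    (mul_pos (show (0:ℝ) < 1 - Real.log 2 by linarith)
      (Real.rpow_pos_of_pos two_pos (-1 - α)))
    (fun u hu => ?_)
  · have hu0 : (0:ℝ) < u := hu
    have := Real.log_le_sub_one_of_pos (show (0:ℝ) < 1 + u by linarith)
    exact mul_nonneg (by linarith) (Real.rpow_pos_of_pos hu0 _).le
  · have hu1 : (1:ℝ) < u := hu.1
    have hu2 : u ≤ 2 := hu.2
    have hu0 : (0:ℝ) < u := by linarith
    have l1 : 1 - Real.log 2 ≤ u - Real.log (1 + u) := by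
      have a1 : Real.log (1 + u) ≤ Real.log (2 * u) :=
        Real.log_le_log (by linarith) (by linarith)
      have a2 : Real.log (2 * u) = Real.log 2 + Real.log u :=
        Real.log_mul two_ne_zero hu0.ne'
      have a3 : Real.log u ≤ u - 1 := Real.log_le_sub_one_of_pos hu0
      linarith
    have l2 : (2:ℝ) ^ (-1 - α) ≤ u ^ (-1 - α) :=
      Real.rpow_le_rpow_of_nonpos hu0 hu2 (by linarith)
    refine mul_le_mul l1 l2 (Real.rpow_pos_of_pos two_pos _).le ?_
    have := Real.log_le_sub_one_of_pos (show (0:ℝ) < 1 + u by linarith)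
    linarith

lemma sum_rpow_mul_K (n : ℕ) (x : Fin n → ℝ) (hx : ∀ i, 0 < x i) {φ : ℝ → ℝ} {α : ℝ}
    (hint : IntegrableOn (fun u => φ u * u ^ (-1 - α)) (Ioi 0)) :
    (∑ i, x i ^ α) * (∫ u in Ioi 0, φ u * u ^ (-1 - α))
      = ∫ u in Ioi 0, (∑ i, φ (x i * u)) * u ^ (-1 - α) := by
  rw [show (fun u : ℝ => (∑ i, φ (x i * u)) * u ^ (-1 - α))
      = fun u : ℝ => ∑ i, φ (x i * u) * u ^ (-1 - α) from
    funext fun u => Finset.sum_mul _ _ _]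
  rw [integral_finset_sum _ (fun i _ => scale_integrable hint (hx i)), Finset.sum_mul]
  exact Finset.sum_congr rfl fun i _ => (scale_eq hint (hx i)).symm

lemma integrable_sum_phi (n : ℕ) (x : Fin n → ℝ) (hx : ∀ i, 0 < x i) {φ : ℝ → ℝ} {α : ℝ}
    (hint : IntegrableOn (fun u => φ u * u ^ (-1 - α)) (Ioi 0)) :
    IntegrableOn (fun u => (∑ i, φ (x i * u)) * u ^ (-1 - α)) (Ioi 0) := by
  rw [show (fun u : ℝ => (∑ i, φ (x i * u)) * u ^ (-1 - α))
      = fun u : ℝ => ∑ i, φ (x i * u) * u ^ (-1 - α) from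
    funext fun u => Finset.sum_mul _ _ _]
  exact integrable_finset_sum _ (fun i _ => scale_integrable hint (hx i))

lemma main_compare (n : ℕ) (x y : Fin n → ℝ)
    (hx : ∀ i, 0 < x i) (hy : ∀ i, 0 < y i) {φ : ℝ → ℝ} {α : ℝ}
    (hint : IntegrableOn (fun u => φ u * u ^ (-1 - α)) (Ioi 0))
    (hK : 0 < ∫ u in Ioi 0, φ u * u ^ (-1 - α))
    (hmono : ∀ u : ℝ, 0 < u → ∑ i, φ (x i * u) ≤ ∑ i, φ (y i * u)) :
    ∑ i, x i ^ α ≤ ∑ i, y i ^ α := by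
  rw [← mul_le_mul_iff_left₀ hK, sum_rpow_mul_K n x hx hint, sum_rpow_mul_K n y hy hint]
  refine setIntegral_mono_on (integrable_sum_phi n x hx hint)
    (integrable_sum_phi n y hy hint) measurableSet_Ioi (fun u hu => ?_)
  exact mul_le_mul_of_nonneg_right (hmono u hu)
    (Real.rpow_pos_of_pos hu _).le

theorem stmt_11 (n : ℕ) (x y : Fin n → ℝ)
    (hx : ∀ i, 0 < x i) (hy : ∀ i, 0 < y i)
    (hx1 : ∑ i, x i = 1) (hy1 : ∑ i, y i = 1)
    (α : ℝ) (hα : α ∈ Set.Ioo (0 : ℝ) 1 ∪ Set.Ioc 1 2)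
    (hE : ∀ k, 1 ≤ k → k ≤ n → esymm n k x ≤ esymm n k y) :
    renyiEntropy n α x ≤ renyiEntropy n α y := by
  have hn : 0 < n := by
    rcases Nat.eq_zero_or_pos n with rfl | h
    · simp at hx1
    · exact h
  have : Nonempty (Fin n) := ⟨⟨0, hn⟩⟩
  have hSx : 0 < ∑ i, x i ^ α :=
    Finset.sum_pos (fun i _ => Real.rpow_pos_of_pos (hx i) α) Finset.univ_nonempty
  have hSy : 0 < ∑ i, y i ^ α :=
    Finset.sum_pos (fun i _ => Real.rpow_pos_of_pos (hy i) α) Finset.univ_nonempty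
  unfold renyiEntropy
  rcases hα with ⟨h0, h1⟩ | ⟨h1, h2⟩
  · -- 0 < α < 1
    have hxy : ∑ i, x i ^ α ≤ ∑ i, y i ^ α := by
      refine main_compare n x y hx hy (int1 h0 h1) (K1_pos h0 h1) (fun u hu => ?_)
      exact sum_log_mono n x y hx hy hE u hu.le
    exact mul_le_mul_of_nonneg_left (Real.log_le_log hSx hxy)
      (div_pos one_pos (by linarith : (0:ℝ) < 1 - α)).le
  · -- 1 < α ≤ 2
    have hyx : ∑ i, y i ^ α ≤ ∑ i, x i ^ α := by
      rcases eq_or_lt_of_le h2 with rfl | h2'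
      · -- α = 2
        have e2 : ∀ z : Fin n → ℝ, (∑ i, z i = 1) →
            ∑ i, z i ^ (2:ℝ) = 1 - 2 * esymm n 2 z := by
          intro z hz1
          have h := sq_sum_eq n z Finset.univ
          rw [hz1] at h
          have hr : ∀ i : Fin n, z i ^ (2:ℝ) = z i ^ (2:ℕ) := fun i => by
            rw [show (2:ℝ) = ((2:ℕ):ℝ) by norm_num, Real.rpow_natCast]
          rw [Finset.sum_congr rfl fun i _ => hr i]
          rw [esymm]
          nlinarith [h]
        rw [e2 x hx1, e2 y hy1]
        have he2 : esymm n 2 x ≤ esymm n 2 y := by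
          rcases le_or_gt 2 n with h | h
          · exact hE 2 (by norm_num) h
          · have hz : ∀ z : Fin n → ℝ, esymm n 2 z = 0 := by
              intro z
              rw [esymm, Finset.powersetCard_eq_empty.mpr (by
                simpa using Nat.lt_of_lt_of_le h (le_of_eq rfl)), Finset.sum_empty]
            rw [hz x, hz y]
          -- done
        linarith
      · -- 1 < α < 2
        refine main_compare n y x hy hx (int2 h1 h2') (K2_pos h1 h2') (fun u hu => ?_)
        have hl := sum_log_mono n x y hx hy hE u hu.le
        have ex : ∀ z : Fin n → ℝ, (∑ i, z i = 1) →
            ∑ i, (z i * u - Real.log (1 + z i * u))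
              = u - ∑ i, Real.log (1 + z i * u) := by
          intro z hz1
          rw [Finset.sum_sub_distrib, ← Finset.sum_mul, hz1, one_mul]
        rw [ex x hx1, ex y hy1]
        linarith
    have hne : 1 / (1 - α) ≤ 0 := by
      apply div_nonpos_of_nonneg_of_nonpos zero_le_one
      linarith
    exact mul_le_mul_of_nonpos_left (Real.log_le_log hSy hyx) hne
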